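/- Let m ≥ 2, n ≥ 2k and 3 ≤ k ≤ ⌊n/2⌋. Then every matrix A ∈ S^(k)_{m×n} is self non-overlapping (unbordered): there is no nonzero shift (p,q) with |p| ≤ m−1, |q| ≤ n−1 such that A(i,j) = A(i+p, j+q) for all index pairs (i,j) for which both (i,j) and (i+p,j+q) are valid positions. -/

import Mathlib

/-- A binary string (list of booleans, `false` = 0, `true` = 1) avoids `0^k`
and `1^k`, i.e. it contains neither `k` consecutive 0's nor `k` consecutive 1's. -/
def Avoids (k : ℕ) (s : List Bool) : Prop :=
  ¬ (List.replicate k false <:+: s) ∧ ¬ (List.replicate k true <:+: s)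
/-- `(p, q)` is an overlap of `B` on `A`: a nonzero integer shift with
`|p| ≤ m−1`, `|q| ≤ n−1` such that `A (i,j) = B (i+p, j+q)` whenever both
`(i,j)` and `(i+p, j+q)` are valid positions. -/
def IsOverlap {m n : ℕ} (A B : Fin m → Fin n → Bool) (p q : ℤ) : Prop :=
  ¬ (p = 0 ∧ q = 0) ∧ p.natAbs ≤ m - 1 ∧ q.natAbs ≤ n - 1 ∧
    ∀ (i : Fin m) (j : Fin n) (i' : Fin m) (j' : Fin n),
      (i' : ℤ) = (i : ℤ) + p → (j' : ℤ) = (j : ℤ) + q → A i j = B i' j'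
/-- The `i`-th row (0-indexed) of an `m × n` binary matrix, read as a binary string. -/
def row {m n : ℕ} (A : Fin m → Fin n → Bool) (i : ℕ) : List Bool :=
  List.ofFn (fun j : Fin n => if h : i < m then A ⟨i, h⟩ j else false)
/-- The set `S^(k)_{m×n}`: binary `m × n` matrices whose first row is
`1^{k−1} 0 w 1 0^{k−1}` (with `0w1` of length `n−2k+2` avoiding `0^k` and `1^k`),
whose middle rows end with `0` and avoid `0^k` and `1^k`, and whose last row is
`1^k v 0^k` (with `v` of length `n−2k` avoiding `0^k` and `1^k`). -/
def SkSet (m n k : ℕ) : Set (Fin m → Fin n → Bool) :=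
  {A |
    (∃ v : List Bool, v.length = n - 2*k + 2 ∧ Avoids k v ∧
        v.head? = some false ∧ v.getLast? = some true ∧
        row A 0 = List.replicate (k-1) true ++ v ++ List.replicate (k-1) false) ∧
    (∀ i : ℕ, 1 ≤ i → i ≤ m - 2 → Avoids k (row A i) ∧ (row A i).getLast? = some false) ∧
    (∃ v : List Bool, v.length = n - 2*k ∧ Avoids k v ∧
        row A (m-1) = List.replicate k true ++ v ++ List.replicate k false)}

lemma run_of_infix {k : ℕ} {b : Bool} {s : List Bool} (h : List.replicate k b <:+: s) :
    ∃ a, a + k ≤ s.length ∧ ∀ t, t < k → s[a+t]? = some b := by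
  obtain ⟨u, w, hs⟩ := h
  refine ⟨u.length, ?_, ?_⟩
  · have := congrArg List.length hs
    simp at this; omega
  · intro t ht
    subst hs
    rw [List.append_assoc, List.getElem?_append_right (by omega)]
    simp [List.getElem?_append, ht]

lemma infix_of_run {k a : ℕ} {b : Bool} {s : List Bool} (hlen : a + k ≤ s.length)
    (h : ∀ t, t < k → s[a+t]? = some b) : List.replicate k b <:+: s := by
  refine ⟨s.take a, s.drop (a+k), ?_⟩
  have hrep : List.replicate k b = (s.drop a).take k := by
    apply List.ext_getElem?
    intro t
    rw [List.getElem?_take, List.getElem?_replicate, List.getElem?_drop]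
    by_cases ht : t < k
    · simp [ht, h t ht]
    · simp [ht]
  rw [hrep, ← List.drop_drop, List.append_assoc, List.take_append_drop, List.take_append_drop]

lemma avoids_pattern0 {k : ℕ} (hk : 3 ≤ k) {v : List Bool} (hv : Avoids k v)
    (hh : v.head? = some false) (hl : v.getLast? = some true) :
    Avoids k (List.replicate (k-1) true ++ v ++ List.replicate (k-1) false) := by
  set L := v.length with hL
  set s := List.replicate (k-1) true ++ v ++ List.replicate (k-1) false with hs
  have hvne : v ≠ [] := by rintro rfl; simp at hh
  have hL1 : 1 ≤ L := List.length_pos_iff.mpr hvne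
  have hslen : s.length = (k-1) + (L + (k-1)) := by simp [hs, hL]
  have f1 : ∀ j, j < k-1 → s[j]? = some true := by
    intro j hj
    rw [hs, List.getElem?_append_left (by simp <;> omega),
      List.getElem?_append_left (by simp <;> omega), List.getElem?_replicate, if_pos hj]
  have f2 : ∀ t, t < L → s[(k-1)+t]? = v[t]? := by
    intro t ht
    rw [hs, List.getElem?_append_left (by simp <;> omega), List.getElem?_append_right (by simp)]
    congr 1
    simp
  have f3 : ∀ t, t < k-1 → s[(k-1)+L+t]? = some false := by
    intro t ht
    rw [hs, List.getElem?_append_right (by simp <;> omega), List.getElem?_replicate,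
      if_pos (by simp <;> omega)]
  have hv0 : v[0]? = some false := by rwa [List.head?_eq_getElem?] at hh
  have hvL : v[L-1]? = some true := by rwa [List.getLast?_eq_getElem?] at hl
  constructor
  · intro h
    obtain ⟨a, hak, hb⟩ := run_of_infix h
    rw [hslen] at hak
    have ha1 : k - 1 ≤ a := by
      by_contra hc
      have := (f1 a (by omega)).symm.trans (by simpa using hb 0 (by omega))
      simp at this
    by_cases hcase : a + k ≤ (k-1) + L
    · refine hv.1 (infix_of_run (a := a-(k-1)) (by omega) ?_)
      intro t ht
      have h1 := hb t ht
      rw [show a + t = (k-1) + (a-(k-1)+t) by omega, f2 (a-(k-1)+t) (by omega)] at h1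
      exact h1
    · have h1 := hb ((k+L-2) - a) (by omega)
      rw [show a + ((k+L-2) - a) = (k-1) + (L-1) by omega] at h1
      have h2 := (f2 (L-1) (by omega)).trans hvL
      rw [h1] at h2
      simp at h2
  · intro h
    obtain ⟨a, hak, hb⟩ := run_of_infix h
    rw [hslen] at hak
    have ha2 : a + k ≤ (k-1) + L := by
      by_contra hc
      have h1 := hb ((k-1+L) - a) (by omega)
      rw [show a + ((k-1+L) - a) = (k-1) + L + 0 by omega] at h1
      have := (f3 0 (by omega)).symm.trans h1
      simp at this
    by_cases hcase : k - 1 ≤ a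
    · refine hv.2 (infix_of_run (a := a-(k-1)) (by omega) ?_)
      intro t ht
      have h1 := hb t ht
      rw [show a + t = (k-1) + (a-(k-1)+t) by omega, f2 (a-(k-1)+t) (by omega)] at h1
      exact h1
    · have h1 := hb ((k-1) - a) (by omega)
      rw [show a + ((k-1) - a) = (k-1) + 0 by omega] at h1
      have h2 := (f2 0 (by omega)).trans hv0
      rw [h1] at h2
      simp at h2

/-- Every matrix of `S^(k)_{m×n}` is self non-overlapping (unbordered). -/
theorem selfNonOverlapping_of_mem_SkSet (m n k : ℕ) (hm : 2 ≤ m) (hk : 3 ≤ k)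
    (hkn : k ≤ n / 2) (hn : 2 * k ≤ n)
    (A : Fin m → Fin n → Bool) (hA : A ∈ SkSet m n k) :
    ¬ ∃ p q : ℤ, IsOverlap A A p q := by
  rintro ⟨p, q, hnz, hP, hQ, hE⟩
  obtain ⟨⟨v1, hl1, hav1, hh1, hlast1, hrow0⟩, hmid, ⟨v2, hl2, hav2, hrowl⟩⟩ := hA
  set B : ℕ → ℕ → Bool := fun i j =>
    if h : i < m then if h' : j < n then A ⟨i, h⟩ ⟨j, h'⟩ else false else false with hBdef
  have hgetB : ∀ i j, i < m → j < n → (row A i)[j]? = some (B i j) := by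
    intro i j hi hj
    rw [row, List.getElem?_ofFn]
    simp [List.ofFnNthVal, hj, hBdef, hi]
  have hrowlen : ∀ i, (row A i).length = n := by intro i; simp [row]
  have hEB : ∀ i j i' j' : ℕ, i < m → j < n → i' < m → j' < n →
      (i' : ℤ) = (i : ℤ) + p → (j' : ℤ) = (j : ℤ) + q → B i j = B i' j' := by
    intro i j i' j' hi hj hi' hj' e1 e2
    have := hE ⟨i, hi⟩ ⟨j, hj⟩ ⟨i', hi'⟩ ⟨j', hj'⟩ (by exact_mod_cast e1) (by exact_mod_cast e2)
    simpa [hBdef, hi, hj, hi', hj'] using this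
  set P := p.natAbs with hPdef
  set Q := q.natAbs with hQdef
  have hPm : P ≤ m - 1 := hP
  have hQn : Q ≤ n - 1 := hQ
  have hne : ¬ (P = 0 ∧ Q = 0) := by
    rintro ⟨h1, h2⟩
    exact hnz ⟨Int.natAbs_eq_zero.mp h1, Int.natAbs_eq_zero.mp h2⟩
  -- facts about first row
  have hB0 : ∀ j, j < n →
      (List.replicate (k-1) true ++ v1 ++ List.replicate (k-1) false)[j]? = some (B 0 j) := by
    intro j hj; rw [← hrow0]; exact hgetB 0 j (by omega) hj
  have hB0true : ∀ j, j + 2 ≤ k → B 0 j = true := by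
    intro j hj
    have h1 := hB0 j (by omega)
    rw [List.getElem?_append_left (by simp <;> omega),
      List.getElem?_append_left (by simp <;> omega),
      List.getElem?_replicate, if_pos (by omega)] at h1
    simpa using h1.symm
  have hB00false : B 0 (n-1) = false := by
    have h1 := hB0 (n-1) (by omega)
    rw [List.getElem?_append_right (by simp <;> omega), List.getElem?_replicate,
      if_pos (by simp <;> omega)] at h1
    simpa using h1.symm
  -- facts about last row
  have hBm : ∀ j, j < n →
      (List.replicate k true ++ v2 ++ List.replicate k false)[j]? = some (B (m-1) j) := by
    intro j hj; rw [← hrowl]; exact hgetB (m-1) j (by omega) hj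
  have hBmtrue : ∀ j, j < k → B (m-1) j = true := by
    intro j hj
    have h1 := hBm j (by omega)
    rw [List.getElem?_append_left (by simp <;> omega),
      List.getElem?_append_left (by simp <;> omega),
      List.getElem?_replicate, if_pos (by omega)] at h1
    simpa using h1.symm
  have hBmfalse : ∀ j, n - k ≤ j → j < n → B (m-1) j = false := by
    intro j hj1 hj2
    have h1 := hBm j hj2
    rw [List.getElem?_append_right (by simp <;> omega), List.getElem?_replicate,
      if_pos (by simp <;> omega)] at h1
    simpa using h1.symm
  have hBmv : ∀ t, t < n - 2*k → v2[t]? = some (B (m-1) (k+t)) := by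
    intro t ht
    have h1 := hBm (k+t) (by omega)
    rw [List.getElem?_append_left (by simp <;> omega), List.getElem?_append_right (by simp)] at h1
    rw [← h1]
    congr 1
    simp
  -- every row ends with 0
  have hBlast : ∀ i, i < m → B i (n-1) = false := by
    intro i hi
    by_cases h0 : i = 0
    · subst h0; exact hB00false
    by_cases hl : i = m-1
    · subst hl; exact hBmfalse (n-1) (by omega) (by omega)
    · have h1 := (hmid i (by omega) (by omega)).2
      rw [List.getLast?_eq_getElem?, hrowlen i, hgetB i (n-1) hi (by omega)] at h1
      simpa using h1
  -- all rows but the last avoid both patterns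
  have havoid : ∀ i, i + 1 < m → Avoids k (row A i) := by
    intro i hi
    by_cases h0 : i = 0
    · subst h0; rw [hrow0]; exact avoids_pattern0 hk hav1 hh1 hlast1
    · exact (hmid i (by omega) (by omega)).1
  -- core argument for a purely horizontal shift
  have core3 : 1 ≤ Q → (∀ j, j + Q < n → B (m-1) j = B (m-1) (j+Q)) → False := by
    intro hQ1 E3
    rcases le_or_gt (n-k) Q with hc1 | hc1
    · have h1 := E3 0 (by omega)
      rw [Nat.zero_add, hBmtrue 0 (by omega), hBmfalse Q (by omega) (by omega)] at h1
      simp at h1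
    rcases le_or_gt k Q with hc2 | hc2
    · have hblock : ∀ t, t < k → B (m-1) (n-k-Q+t) = false := by
        intro t ht
        rw [E3 (n-k-Q+t) (by omega)]
        exact hBmfalse _ (by omega) (by omega)
      rcases le_or_gt k (n-k-Q) with hc3 | hc3
      · refine hav2.1 (infix_of_run (a := n-k-Q-k) (by omega) ?_)
        intro t ht
        rw [hBmv (n-k-Q-k+t) (by omega), show k + (n-k-Q-k+t) = n-k-Q+t by omega,
          hblock t ht]
      · have h1 := hblock (k-1-(n-k-Q)) (by omega)
        rw [show n-k-Q + (k-1-(n-k-Q)) = k-1 by omega, hBmtrue (k-1) (by omega)] at h1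
        simp at h1
    · have claim : ∀ d, d < n → B (m-1) (n-1-d) = false := by
        intro d
        induction d using Nat.strong_induction_on with
        | _ d IH =>
          intro hd
          rcases le_or_gt d (k-1) with hdk | hdk
          · exact hBmfalse _ (by omega) (by omega)
          · have h1 := E3 (n-1-d) (by omega)
            rw [show n-1-d+Q = n-1-(d-Q) by omega] at h1
            rw [h1]
            exact IH (d-Q) (by omega) (by omega)
      have h1 := claim (n-1) (by omega)
      rw [show n-1-(n-1) = 0 by omega, hBmtrue 0 (by omega)] at h1
      simp at h1
  -- core argument, shift down-right
  have main1 : 1 ≤ P → (∀ i j, i + P < m → j + Q < n → B i j = B (i+P) (j+Q)) → False := by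
    intro hP1 E1
    rcases le_or_gt (Q + k) n with hc | hc
    · refine (havoid (m-1-P) (by omega)).1
        (infix_of_run (a := n-k-Q) (s := row A (m-1-P)) (by rw [hrowlen]; omega) ?_)
      intro t ht
      rw [hgetB (m-1-P) (n-k-Q+t) (by omega) (by omega)]
      have h1 := E1 (m-1-P) (n-k-Q+t) (by omega) (by omega)
      rw [show m-1-P+P = m-1 by omega] at h1
      rw [h1, hBmfalse (n-k-Q+t+Q) (by omega) (by omega)]
    · have h1 := E1 0 (n-1-Q) (by omega) (by omega)
      rw [show (0:ℕ)+P = P by omega, show n-1-Q+Q = n-1 by omega,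
        hB0true (n-1-Q) (by omega), hBlast P (by omega)] at h1
      simp at h1
  -- core argument, shift down-left
  have main2 : 1 ≤ P → (∀ i j, i + P < m → j + Q < n → B i (j+Q) = B (i+P) j) → False := by
    intro hP1 E2
    rcases le_or_gt (Q + k) n with hc | hc
    · refine (havoid (m-1-P) (by omega)).2
        (infix_of_run (a := Q) (s := row A (m-1-P)) (by rw [hrowlen]; omega) ?_)
      intro t ht
      rw [hgetB (m-1-P) (Q+t) (by omega) (by omega)]
      have h1 := E2 (m-1-P) t (by omega) (by omega)
      rw [show m-1-P+P = m-1 by omega] at h1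
      rw [show Q + t = t + Q by omega, h1, hBmtrue t (by omega)]
    · have h1 := E2 (m-1-P) (n-1-Q) (by omega) (by omega)
      rw [show m-1-P+P = m-1 by omega, show n-1-Q+Q = n-1 by omega,
        hBlast (m-1-P) (by omega), hBmtrue (n-1-Q) (by omega)] at h1
      simp at h1
  -- dispatch on the signs of p and q
  rcases le_or_gt 0 p with hp | hp
  · rcases le_or_gt 0 q with hq | hq
    · have E1 : ∀ i j, i + P < m → j + Q < n → B i j = B (i+P) (j+Q) := by
        intro i j hi hj
        exact hEB i j (i+P) (j+Q) (by omega) (by omega) (by omega) (by omega)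
          (by push_cast; omega) (by push_cast; omega)
      rcases Nat.eq_zero_or_pos P with hP0 | hP1
      · refine core3 (by omega) ?_
        intro j hj
        have h1 := E1 (m-1) j (by omega) hj
        rwa [hP0, Nat.add_zero] at h1
      · exact main1 hP1 E1
    · have E2 : ∀ i j, i + P < m → j + Q < n → B i (j+Q) = B (i+P) j := by
        intro i j hi hj
        exact hEB i (j+Q) (i+P) j (by omega) (by omega) (by omega) (by omega)
          (by push_cast; omega) (by push_cast; omega)
      rcases Nat.eq_zero_or_pos P with hP0 | hP1
      · refine core3 (by omega) ?_
        intro j hj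
        have h1 := E2 (m-1) j (by omega) hj
        rw [hP0, Nat.add_zero] at h1
        exact h1.symm
      · exact main2 hP1 E2
  · rcases le_or_gt q 0 with hq | hq
    · have E1 : ∀ i j, i + P < m → j + Q < n → B i j = B (i+P) (j+Q) := by
        intro i j hi hj
        exact (hEB (i+P) (j+Q) i j (by omega) (by omega) (by omega) (by omega)
          (by push_cast; omega) (by push_cast; omega)).symm
      rcases Nat.eq_zero_or_pos P with hP0 | hP1
      · omega
      · exact main1 hP1 E1
    · have E2 : ∀ i j, i + P < m → j + Q < n → B i (j+Q) = B (i+P) j := by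
        intro i j hi hj
        exact (hEB (i+P) j i (j+Q) (by omega) (by omega) (by omega) (by omega)
          (by push_cast; omega) (by push_cast; omega)).symm
      rcases Nat.eq_zero_or_pos P with hP0 | hP1
      · omega
      · exact main2 hP1 E2
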